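/- arXiv:1006.4990 — 3 statements merged into one kernel-verified Lean document; each statement's English description precedes it below -/
import Mathlib

section
/- If update functions are executed in parallel such that no two simultaneously executing functions have overlapping scopes (full consistency), then the parallel execution is sequentially consistent: there exists a sequential ordering of the same update function applications producing an identical final state. -/
/-- Data locations of a data graph: vertex data and edge data. -/
abbrev Loc (V : Type*) := V ⊕ Sym2 V

/-- The full scope of a vertex `v`: the vertex itself, its neighbors, and
its incident edges. -/
def scope {V : Type*} (G : SimpleGraph V) (v : V) : Set (Loc V) :=
  {l | match l with
    | Sum.inl u => u = v ∨ G.Adj u v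
    | Sum.inr e => v ∈ e ∧ e ∈ G.edgeSet}

/-- One parallel step: all vertices of `S` are updated simultaneously; the state
changes on the scope of each updated vertex according to its update function, and
is unchanged elsewhere. -/
def ParStep {V D : Type*} (G : SimpleGraph V) (f : V → (Loc V → D) → (Loc V → D))
    (S : Finset V) (σ σ' : Loc V → D) : Prop :=
  (∀ v ∈ S, ∀ l ∈ scope G v, σ' l = f v σ l) ∧
  (∀ l, (∀ v ∈ S, l ∉ scope G v) → σ' l = σ l)

/-- A parallel execution (full consistency): a sequence of parallel steps, where
within each step the simultaneously updated vertices have pairwise disjoint scopes. -/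
inductive ParExec {V D : Type*} (G : SimpleGraph V)
    (f : V → (Loc V → D) → (Loc V → D)) :
    List (Finset V) → (Loc V → D) → (Loc V → D) → Prop
  | nil (σ : Loc V → D) : ParExec G f [] σ σ
  | cons {S : Finset V} {steps : List (Finset V)} {σ σ₁ σ₂ : Loc V → D} :
      (∀ u ∈ S, ∀ v ∈ S, u ≠ v → Disjoint (scope G u) (scope G v)) →
      ParStep G f S σ σ₁ → ParExec G f steps σ₁ σ₂ →
      ParExec G f (S :: steps) σ σ₂

lemma foldl_inv {V D : Type*} (G : SimpleGraph V) (f : V → (Loc V → D) → (Loc V → D))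
    (hreads : ∀ v (σ σ' : Loc V → D), (∀ l ∈ scope G v, σ l = σ' l) →
      ∀ l ∈ scope G v, f v σ l = f v σ' l)
    (hwrites : ∀ v (σ : Loc V → D) (l : Loc V), l ∉ scope G v → f v σ l = σ l) :
    ∀ (L : List V), L.Pairwise (fun u v => Disjoint (scope G u) (scope G v)) →
    ∀ (σ : Loc V → D),
      (∀ v ∈ L, ∀ l ∈ scope G v, L.foldl (fun s v => f v s) σ l = f v σ l) ∧
      (∀ l, (∀ v ∈ L, l ∉ scope G v) → L.foldl (fun s v => f v s) σ l = σ l) := by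
  intro L
  induction L with
  | nil => intro _ σ; exact ⟨by simp, by simp⟩
  | cons v L ih =>
    intro hp σ
    rw [List.pairwise_cons] at hp
    obtain ⟨hv, hL⟩ := hp
    obtain ⟨ih1, ih2⟩ := ih hL (f v σ)
    constructor
    · intro u hu l hl
      simp only [List.foldl_cons]
      rcases List.mem_cons.mp hu with rfl | hu
      · have : ∀ w ∈ L, l ∉ scope G w := fun w hw hlw =>
          Set.disjoint_left.mp (hv w hw) hl hlw
        exact ih2 l this
      · rw [ih1 u hu l hl]
        refine hreads u (f v σ) σ ?_ l hl
        intro l' hl'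
        exact hwrites v σ l' (fun h => Set.disjoint_left.mp (hv u hu) h hl')
    · intro l hl
      simp only [List.foldl_cons]
      rw [ih2 l (fun w hw => hl w (List.mem_cons_of_mem v hw))]
      exact hwrites v σ l (hl v List.mem_cons_self)

/-- Full consistency implies sequential consistency: if update functions read and
write only within their scope and no two simultaneously executed functions have
overlapping scopes, then there is a sequential ordering of the same update
applications producing an identical final state. -/
theorem full_consistency_sequentially_consistent
    {V D : Type*} (G : SimpleGraph V) (f : V → (Loc V → D) → (Loc V → D))
    (hreads : ∀ v (σ σ' : Loc V → D), (∀ l ∈ scope G v, σ l = σ' l) →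
      ∀ l ∈ scope G v, f v σ l = f v σ' l)
    (hwrites : ∀ v (σ : Loc V → D) (l : Loc V), l ∉ scope G v → f v σ l = σ l)
    (steps : List (Finset V)) (σ σf : Loc V → D)
    (hexec : ParExec G f steps σ σf) :
    ∃ L : List V, L.Perm (steps.flatMap Finset.toList) ∧
      L.foldl (fun s v => f v s) σ = σf := by
  induction hexec with
  | nil σ => exact ⟨[], by simp, rfl⟩
  | @cons S steps σ σ₁ σ₂ hdisj hstep _ ih =>
    obtain ⟨L', hperm, hfold⟩ := ih
    refine ⟨S.toList ++ L', ?_, ?_⟩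
    · rw [List.flatMap_cons]
      exact (List.Perm.refl S.toList).append hperm
    · rw [List.foldl_append]
      have hpw : S.toList.Pairwise (fun u v => Disjoint (scope G u) (scope G v)) := by
        refine S.nodup_toList.imp_of_mem ?_
        intro a b ha hb hne
        exact hdisj a (Finset.mem_toList.mp ha) b (Finset.mem_toList.mp hb) hne
      obtain ⟨h1, h2⟩ := foldl_inv G f hreads hwrites S.toList hpw σ
      have : S.toList.foldl (fun s v => f v s) σ = σ₁ := by
        funext l
        by_cases hc : ∃ v ∈ S, l ∈ scope G v
        · obtain ⟨v, hv, hlv⟩ := hc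
          rw [h1 v (Finset.mem_toList.mpr hv) l hlv, hstep.1 v hv l hlv]
        · push_neg at hc
          rw [h2 l (fun w hw => hc w (Finset.mem_toList.mp hw)), hstep.2 l hc]
      rw [this, hfold]
end

section
/- Graham's list scheduling bound: any greedy schedule of n unit-time tasks with precedence constraints given by a DAG on p processors completes in at most T* + L steps, where L is the length of the longest chain and T* = ⌈n/p⌉; in particular the greedy makespan is at most twice the optimal makespan minus one optimal unit, i.e., at most (2 − 1/p) times optimal. -/
/-- Graham's list-scheduling bound for unit-time tasks. Tasks form a DAG given
by a strict order `prec`; a schedule assigns each task a unit time slot,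
respecting precedence and running at most `p` tasks per slot. A greedy (list)
schedule never leaves a processor idle while some task has all its predecessors
completed. If every precedence chain has length at most `Lc` (and some chain
attains `Lc`), then the greedy makespan `M` satisfies
`M ≤ ⌈n/p⌉ + Lc ≤ 2·OPT` and more precisely `M ≤ (2 − 1/p)·OPT`, for the
makespan `Mopt` of any valid (in particular an optimal) schedule. -/
theorem graham_list_scheduling
    {T : Type*} [Fintype T] [DecidableEq T] [Nonempty T]
    (prec : T → T → Prop) (htrans : Transitive prec) (hirrefl : Irreflexive prec)
    (p : ℕ) (hp : 0 < p)
    (Lc : ℕ)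
    (hchain_le : ∀ l : List T, l.Chain' prec → l.length ≤ Lc)
    (hchain_ex : ∃ l : List T, l.Chain' prec ∧ l.length = Lc)
    (σ σopt : T → ℕ)
    -- both schedules are valid
    (hprec : ∀ a b, prec a b → σ a < σ b)
    (hcap : ∀ τ : ℕ, (Finset.univ.filter fun t => σ t = τ).card ≤ p)
    (hoptprec : ∀ a b, prec a b → σopt a < σopt b)
    (hoptcap : ∀ τ : ℕ, (Finset.univ.filter fun t => σopt t = τ).card ≤ p)
    -- the schedule σ is greedy: a processor is idle at time τ only if every
    -- not-yet-started task has a predecessor that has not completed by τ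
    (hgreedy : ∀ (τ : ℕ) (t : T), τ < σ t →
      (Finset.univ.filter fun s => σ s = τ).card < p →
      ∃ s, prec s t ∧ τ ≤ σ s)
    (M Mopt : ℕ)
    (hM : M = Finset.univ.sup σ + 1)
    (hMopt : Mopt = Finset.univ.sup σopt + 1) :
    M ≤ (Fintype.card T + p - 1) / p + Lc ∧
    (Fintype.card T + p - 1) / p + Lc ≤ 2 * Mopt ∧
    (M : ℚ) ≤ (2 - 1 / (p : ℚ)) * (Mopt : ℚ) := by
  classical
  have hσlt : ∀ t, σ t < M := fun t => by
    rw [hM]; exact Nat.lt_succ_of_le (Finset.le_sup (Finset.mem_univ t))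
  have hoptlt : ∀ t, σopt t < Mopt := fun t => by
    rw [hMopt]; exact Nat.lt_succ_of_le (Finset.le_sup (Finset.mem_univ t))
  set n := Fintype.card T with hn
  -- total number of tasks fits in `Mopt` slots of capacity `p`
  have hnle : n ≤ p * Mopt := by
    have h1 : n = ∑ τ ∈ Finset.range Mopt,
        (Finset.univ.filter fun t => σopt t = τ).card := by
      rw [hn, ← Finset.card_univ]
      exact Finset.card_eq_sum_card_fiberwise fun t _ => Finset.mem_range.2 (hoptlt t)
    calc n ≤ ∑ _τ ∈ Finset.range Mopt, p := by
            rw [h1]; exact Finset.sum_le_sum fun τ _ => hoptcap τ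
      _ = p * Mopt := by simp [Finset.sum_const, mul_comm]
  -- any chain fits under σopt, so Lc ≤ Mopt
  have hchainMopt : ∀ l : List T, l.Chain' prec → l.length ≤ Mopt := by
    intro l hl
    have hmono : (l.map σopt).Chain' (· < ·) := by
      unfold List.Chain'
      rw [List.isChain_map]
      exact hl.imp fun a b h => hoptprec a b h
    have hnodup : (l.map σopt).Nodup :=
      (List.isChain_iff_pairwise.1 hmono).imp fun h => ne_of_lt h
    have hsub : (l.map σopt).toFinset ⊆ Finset.range Mopt := by
      intro τ hτ
      rw [List.mem_toFinset, List.mem_map] at hτ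
      obtain ⟨s, -, rfl⟩ := hτ
      exact Finset.mem_range.2 (hoptlt s)
    have := Finset.card_le_card hsub
    rwa [List.toFinset_card_of_nodup hnodup, List.length_map, Finset.card_range] at this
  have hLcMopt : Lc ≤ Mopt := by
    obtain ⟨l, hl, hlen⟩ := hchain_ex
    rw [← hlen]; exact hchainMopt l hl
  have hMopt1 : 1 ≤ Mopt := by omega
  -- key greedy chain construction
  have key : ∀ N (t : T), σ t ≤ N → ∃ l : List T,
      (t :: l).Chain' (fun a b => prec b a) ∧
      ∀ τ, τ < σ t → (Finset.univ.filter fun s => σ s = τ).card < p →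
        ∃ s ∈ l, σ s = τ := by
    intro N
    induction N with
    | zero =>
      intro t ht
      exact ⟨[], List.isChain_singleton t, fun τ hτ _ => absurd hτ (by omega)⟩
    | succ N ih =>
      intro t ht
      by_cases hfull : ∀ τ, τ < σ t → p ≤ (Finset.univ.filter fun s => σ s = τ).card
      · exact ⟨[], List.isChain_singleton t,
          fun τ hτ h => absurd (hfull τ hτ) (Nat.not_le.2 h)⟩
      · push_neg at hfull
        obtain ⟨τ0, hτ0, hτ0card⟩ := hfull
        obtain ⟨s1, hs1, -⟩ := hgreedy τ0 t hτ0 hτ0card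
        have hSne : (Finset.univ.filter fun s => prec s t).Nonempty :=
          ⟨s1, Finset.mem_filter.2 ⟨Finset.mem_univ _, hs1⟩⟩
        obtain ⟨s0, hs0mem, hs0max⟩ := Finset.exists_max_image _ σ hSne
        have hs0prec : prec s0 t := (Finset.mem_filter.1 hs0mem).2
        have hs0lt : σ s0 < σ t := hprec _ _ hs0prec
        obtain ⟨l', hl'chain, hl'cov⟩ := ih s0 (by omega)
        refine ⟨s0 :: l', List.isChain_cons_cons.2 ⟨hs0prec, hl'chain⟩, ?_⟩
        intro τ hτ hcard
        rcases lt_trichotomy τ (σ s0) with h | h | h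
        · obtain ⟨s, hsl, hs⟩ := hl'cov τ h hcard
          exact ⟨s, List.mem_cons_of_mem _ hsl, hs⟩
        · exact ⟨s0, List.mem_cons_self, h.symm⟩
        · obtain ⟨s', hs', hτs'⟩ := hgreedy τ t hτ hcard
          have := hs0max s' (Finset.mem_filter.2 ⟨Finset.mem_univ _, hs'⟩)
          omega
  -- apply to a task finishing last
  obtain ⟨ttop, -, htop⟩ := Finset.exists_mem_eq_sup Finset.univ Finset.univ_nonempty σ
  obtain ⟨l, hlchain, hlcov⟩ := key (σ ttop) ttop le_rfl
  set L := (ttop :: l).reverse with hL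
  have hLchain : L.Chain' prec := by
    unfold List.Chain'
    rw [hL, List.isChain_reverse]
    exact hlchain
  set k := L.length with hkdef
  have hkLc : k ≤ Lc := hchain_le L hLchain
  have hcov : ∀ τ, τ < M → (Finset.univ.filter fun s => σ s = τ).card < p →
      ∃ s ∈ L, σ s = τ := by
    intro τ hτ hc
    have hτ' : τ ≤ σ ttop := by
      rw [hM, htop] at hτ; omega
    rcases eq_or_lt_of_le hτ' with h | h
    · exact ⟨ttop, by simp [hL], h.symm⟩
    · obtain ⟨s, hs, hσs⟩ := hlcov τ h hc
      exact ⟨s, by simp [hL, hs], hσs⟩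
  -- chain slots are distinct
  have hmono : (L.map σ).Chain' (· < ·) := by
    unfold List.Chain'
    rw [List.isChain_map]
    exact hLchain.imp fun a b h => hprec a b h
  have hnodup : (L.map σ).Nodup :=
    (List.isChain_iff_pairwise.1 hmono).imp fun h => ne_of_lt h
  set C := (L.map σ).toFinset with hC
  have hcardC : C.card = k := by
    rw [hC, List.toFinset_card_of_nodup hnodup, List.length_map]
  have hCsub : C ⊆ Finset.range M := by
    intro τ hτ
    rw [hC, List.mem_toFinset, List.mem_map] at hτ
    obtain ⟨s, -, rfl⟩ := hτ
    exact Finset.mem_range.2 (hσlt s)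
  have hkM : k ≤ M := by
    have := Finset.card_le_card hCsub
    rwa [hcardC, Finset.card_range] at this
  -- counting argument
  have hsum : n = ∑ τ ∈ Finset.range M, (Finset.univ.filter fun s => σ s = τ).card := by
    rw [hn, ← Finset.card_univ]
    exact Finset.card_eq_sum_card_fiberwise fun t _ => Finset.mem_range.2 (hσlt t)
  have hbound : (M - k) * p + k ≤ n := by
    have hfull : ∀ τ ∈ Finset.range M \ C,
        p ≤ (Finset.univ.filter fun s => σ s = τ).card := by
      intro τ hτ
      rw [Finset.mem_sdiff, Finset.mem_range] at hτ
      by_contra h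
      push_neg at h
      obtain ⟨s, hs, hσs⟩ := hcov τ hτ.1 h
      exact hτ.2 (by rw [hC, List.mem_toFinset, List.mem_map]; exact ⟨s, hs, hσs⟩)
    have hone : ∀ τ ∈ C, 1 ≤ (Finset.univ.filter fun s => σ s = τ).card := by
      intro τ hτ
      rw [hC, List.mem_toFinset, List.mem_map] at hτ
      obtain ⟨s, -, rfl⟩ := hτ
      exact Finset.card_pos.2 ⟨s, Finset.mem_filter.2 ⟨Finset.mem_univ _, rfl⟩⟩
    have h1 : (Finset.range M \ C).card * p ≤
        ∑ τ ∈ Finset.range M \ C, (Finset.univ.filter fun s => σ s = τ).card := by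
      have := Finset.card_nsmul_le_sum (Finset.range M \ C)
        (fun τ => (Finset.univ.filter fun s => σ s = τ).card) p hfull
      simpa using this
    have h2 : C.card * 1 ≤ ∑ τ ∈ C, (Finset.univ.filter fun s => σ s = τ).card := by
      have := Finset.card_nsmul_le_sum C
        (fun τ => (Finset.univ.filter fun s => σ s = τ).card) 1 hone
      simpa using this
    have hsd : (Finset.range M \ C).card = M - k := by
      rw [Finset.card_sdiff_of_subset hCsub, hcardC, Finset.card_range]
    have hsplit : ∑ τ ∈ Finset.range M \ C, (Finset.univ.filter fun s => σ s = τ).card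
        + ∑ τ ∈ C, (Finset.univ.filter fun s => σ s = τ).card = n := by
      rw [hsum]
      exact Finset.sum_sdiff hCsub
    rw [hsd] at h1
    rw [hcardC] at h2
    omega
  -- part 1
  have hpart1 : M ≤ (n + p - 1) / p + Lc := by
    have h1 : (M - k) * p ≤ n := by omega
    have h2 : M - k ≤ n / p := (Nat.le_div_iff_mul_le hp).2 h1
    have h3 : n / p ≤ (n + p - 1) / p := Nat.div_le_div_right (by omega)
    omega
  -- part 2
  have hceil : (n + p - 1) / p ≤ Mopt := by
    have h2 : n + p - 1 < (Mopt + 1) * p := by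
      have h3 : (Mopt + 1) * p = p * Mopt + p := by ring
      omega
    have := (Nat.div_lt_iff_lt_mul hp).2 h2
    omega
  have hpart2 : (n + p - 1) / p + Lc ≤ 2 * Mopt := by omega
  -- part 3
  have hA : M * p + k ≤ n + k * p := by
    have h1 : (M - k) * p + k * p = M * p := by
      rw [← add_mul]
      congr 1
      omega
    omega
  refine ⟨hpart1, hpart2, ?_⟩
  have hp0 : (0 : ℚ) < p := by exact_mod_cast hp
  have hp1 : (1 : ℚ) ≤ p := by exact_mod_cast hp
  have hq1 : (M : ℚ) * p + k ≤ n + k * p := by exact_mod_cast hA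
  have hq2 : (n : ℚ) ≤ p * Mopt := by exact_mod_cast hnle
  have hq3 : (k : ℚ) ≤ Mopt := by exact_mod_cast le_trans hkLc hLcMopt
  have hrw : (2 - 1 / (p : ℚ)) * Mopt = (2 * p - 1) * Mopt / p := by
    field_simp
  rw [hrw, le_div_iff₀ hp0]
  nlinarith [mul_le_mul_of_nonneg_right hq3 (by linarith : (0:ℚ) ≤ (p:ℚ) - 1)]
end

section
/- If the synchronous update operator on the full state vector is a contraction with factor γ < 1 in the sup norm, then any fair asynchronous (Gauss–Seidel style) execution—in which each coordinate is updated infinitely often using the most recent values of the other coordinates—converges to the unique fixed point. -/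
open Filter

private lemma sup_abs_le_norm {n : ℕ} [NeZero n] (v w : Fin n → ℝ) :
    (⨆ j, |v j - w j|) ≤ ‖v - w‖ := by
  apply ciSup_le
  intro j
  have := norm_le_pi_norm (v - w) j
  simpa using this

/-- If the synchronous update operator `F` is a sup-norm contraction with factor
`γ < 1`, then any fair asynchronous (Gauss–Seidel style) execution — in which
each coordinate is updated infinitely often using the most recent values of the
other coordinates — converges to the unique fixed point of `F`. -/
theorem async_execution_converges
    {n : ℕ} (hn : 0 < n)
    (F : (Fin n → ℝ) → (Fin n → ℝ))
    (γ : ℝ) (hγ0 : 0 ≤ γ) (hγ1 : γ < 1)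
    (hcontr : ∀ x y : Fin n → ℝ, ∀ i : Fin n,
      |F x i - F y i| ≤ γ * ⨆ j, |x j - y j|)
    (idx : ℕ → Fin n)
    (hfair : ∀ i : Fin n, ∀ N : ℕ, ∃ t ≥ N, idx t = i)
    (x : ℕ → Fin n → ℝ)
    (hx : ∀ t, x (t + 1) = Function.update (x t) (idx t) (F (x t) (idx t))) :
    ∃ xstar : Fin n → ℝ, F xstar = xstar ∧ (∀ y, F y = y → y = xstar) ∧
      Tendsto x atTop (nhds xstar) := by
  haveI : NeZero n := ⟨hn.ne'⟩
  -- F is Lipschitz with constant γ in the sup norm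
  have hcontr' : ∀ v w : Fin n → ℝ, ∀ i : Fin n,
      |F v i - F w i| ≤ γ * ‖v - w‖ := by
    intro v w i
    exact (hcontr v w i).trans
      (mul_le_mul_of_nonneg_left (sup_abs_le_norm v w) hγ0)
  set K : NNReal := ⟨γ, hγ0⟩ with hK
  have hlip : LipschitzWith K F := by
    apply LipschitzWith.of_dist_le_mul
    intro v w
    rw [dist_eq_norm]
    rw [pi_norm_le_iff_of_nonneg (by positivity)]
    intro i
    have := hcontr' v w i
    simp only [dist_eq_norm, Real.norm_eq_abs, Pi.sub_apply]; exact this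
  have hC : ContractingWith K F := ⟨by rw [← NNReal.coe_lt_coe]; exact hγ1, hlip⟩
  obtain ⟨xstar, hfix⟩ := hC.exists_fixedPoint (Classical.arbitrary _)
    (edist_ne_top _ _)
  have hfix' : F xstar = xstar := hfix.1
  refine ⟨xstar, hfix', ?_, ?_⟩
  · intro y hy
    exact hC.fixedPoint_unique' hy hfix.1
  -- convergence
  set d : ℕ → ℝ := fun t => ‖x t - xstar‖ with hd
  have hd0 : ∀ t, 0 ≤ d t := fun t => norm_nonneg _
  have hpt : ∀ t i, |x t i - xstar i| ≤ d t := by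
    intro t i
    have := norm_le_pi_norm (x t - xstar) i
    simpa using this
  have hupd : ∀ t i, |F (x t) i - xstar i| ≤ γ * d t := by
    intro t i
    have := hcontr' (x t) xstar i
    rwa [hfix'] at this
  have hstep : ∀ t i, |x (t + 1) i - xstar i| ≤ d t := by
    intro t i
    rw [hx]
    rcases eq_or_ne i (idx t) with h | h
    · subst h
      rw [Function.update_self]
      exact (hupd t _).trans (mul_le_of_le_one_left (hd0 t) hγ1.le)
    · rw [Function.update_of_ne h]
      exact hpt t i
  have hmono : ∀ t, d (t + 1) ≤ d t := by
    intro t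
    rw [hd]
    rw [pi_norm_le_iff_of_nonneg (hd0 t)]
    intro i
    simpa using hstep t i
  have hmono' : ∀ s t, s ≤ t → d t ≤ d s := by
    intro s t hst
    induction t with
    | zero => simp_all
    | succ t ih =>
      rcases Nat.lt_or_ge s (t + 1) with h | h
      · exact (hmono t).trans (ih (Nat.lt_succ_iff.mp h))
      · have : s = t + 1 := le_antisymm hst h
        simp [this]
  -- once coordinate idx t' is updated at time t' ≥ s, its error stays ≤ γ * d s
  have hcoord : ∀ s t', s ≤ t' → ∀ t, t' + 1 ≤ t →
      |x t (idx t') - xstar (idx t')| ≤ γ * d s := by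
    intro s t' hst' t
    induction t with
    | zero => omega
    | succ t ih =>
      intro ht
      rcases Nat.lt_or_ge (t' + 1) (t + 1) with h | h
      · -- t ≥ t' + 1
        have ht' : t' + 1 ≤ t := Nat.lt_succ_iff.mp h
        rw [hx]
        rcases eq_or_ne (idx t') (idx t) with he | he
        · rw [he, Function.update_self]
          rw [← he]
          exact (hupd t (idx t')).trans
            (mul_le_mul_of_nonneg_left (hmono' s t (by omega)) hγ0)
        · rw [Function.update_of_ne he]
          exact ih ht'
      · -- t + 1 = t' + 1, i.e. t = t'
        have : t = t' := by omega
        subst this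
        rw [hx, Function.update_self]
        exact (hupd t (idx t)).trans
          (mul_le_mul_of_nonneg_left (hmono' s t hst') hγ0)
  -- after a full sweep, the error contracts by γ
  have hsweep : ∀ s : ℕ, ∃ T : ℕ, ∀ t, T ≤ t → d t ≤ γ * d s := by
    intro s
    choose tt htt1 htt2 using fun i => hfair i s
    refine ⟨(Finset.univ.sup tt) + 1, ?_⟩
    intro t ht
    rw [hd, pi_norm_le_iff_of_nonneg (by positivity)]
    intro i
    have h1 : tt i + 1 ≤ t := by
      have := Finset.le_sup (f := tt) (Finset.mem_univ i)
      omega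
    have := hcoord s (tt i) (htt1 i) t h1
    rw [htt2 i] at this
    simpa using this
  -- iterate the sweeps
  have hiter : ∀ k : ℕ, ∃ T : ℕ, ∀ t, T ≤ t → d t ≤ γ ^ k * d 0 := by
    intro k
    induction k with
    | zero => exact ⟨0, fun t ht => by simpa using hmono' 0 t (Nat.zero_le t)⟩
    | succ k ih =>
      obtain ⟨T, hT⟩ := ih
      obtain ⟨T', hT'⟩ := hsweep T
      refine ⟨max T T', fun t ht => ?_⟩
      have h1 : d t ≤ γ * d T := hT' t (le_trans (le_max_right _ _) ht)
      have h2 : d T ≤ γ ^ k * d 0 := hT T le_rfl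
      calc d t ≤ γ * d T := h1
        _ ≤ γ * (γ ^ k * d 0) := mul_le_mul_of_nonneg_left h2 hγ0
        _ = γ ^ (k + 1) * d 0 := by ring
  -- conclude convergence
  rw [Metric.tendsto_atTop]
  intro ε hε
  have hlim : Tendsto (fun k : ℕ => γ ^ k * d 0) atTop (nhds 0) := by
    have := (tendsto_pow_atTop_nhds_zero_of_lt_one hγ0 hγ1).mul_const (d 0)
    simpa using this
  obtain ⟨k, hk⟩ := (hlim.eventually (gt_mem_nhds hε)).exists
  obtain ⟨T, hT⟩ := hiter k
  refine ⟨T, fun t ht => ?_⟩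
  rw [dist_eq_norm]
  exact lt_of_le_of_lt (hT t ht) hk
end
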